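/- Given the shift data and operational data of a fully polarized LG-algebra, let ≈ be the relation on P ⊕ N with A ≈ B iff A ≤π B and B ≤π A. Then ≈ is an equivalence relation, ≤π descends to a partial order ≤ on the quotient (P ⊕ N)/≈, the induced operations ⊗', ⊕', \', /', ⊘', ⦸' descend to well-defined operations on the quotient, and the quotient with these operations is a Lambek-Grishin algebra: for all equivalence classes [A], [B], [C], it holds that [B] ≤ [A] \ [C] iff [A] ⊗ [B] ≤ [C] iff [A] ≤ [C] / [B], and [C] ⊘ [B] ≤ [A] iff [C] ≤ [A] ⊕ [B] iff [A] ⦸ [C] ≤ [B]. -/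
import Mathlib


/-- A weakening relation from an ordered set `(α, leA)` to an ordered set `(β, leB)`. -/
def IsWeakeningBetween {α β : Type*} (leA : α → α → Prop) (leB : β → β → Prop)
    (R : α → β → Prop) : Prop :=
  ∀ ⦃a' a b b'⦄, leA a' a → R a b → leB b b' → R a' b'

/-- The shift data of a fully polarized LG-algebra: four posets `P`, `Ṗ` (`Pd`),
`N`, `Ṅ` (`Nd`), adjoint pairs of monotone shift maps `↑ ⊣ ⫞` and `↿ ⊣ ↓`, and
three weakening relations `⪌ʳ` (`gtr : P → Ṗ`), `⪯` (`prec : P → N`) and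
`⪅ᵇ` (`lesb : Ṅ → N`) with `↑p ⪅ᵇ n ↔ p ⪯ n ↔ p ⪌ʳ ↓n`. -/
structure ShiftData (P Pd N Nd : Type*) [PartialOrder P] [PartialOrder Pd]
    [PartialOrder N] [PartialOrder Nd] where
  /-- `↑ : P → Ṅ` -/
  up : P → Nd
  /-- `⫞ : Ṅ → P` -/
  corner : Nd → P
  /-- `↿ : Ṗ → N` -/
  upl : Pd → N
  /-- `↓ : N → Ṗ` -/
  down : N → Pd
  up_mono : Monotone up
  corner_mono : Monotone corner
  upl_mono : Monotone upl
  down_mono : Monotone down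
  /-- the adjunction `↑ ⊣ ⫞` -/
  up_adj : ∀ (p : P) (nd : Nd), up p ≤ nd ↔ p ≤ corner nd
  /-- the adjunction `↿ ⊣ ↓` -/
  upl_adj : ∀ (pd : Pd) (n : N), upl pd ≤ n ↔ pd ≤ down n
  /-- `⪌ʳ : P → Ṗ` -/
  gtr : P → Pd → Prop
  /-- `⪯ : P → N` -/
  prec : P → N → Prop
  /-- `⪅ᵇ : Ṅ → N` -/
  lesb : Nd → N → Prop
  gtr_wk : IsWeakeningBetween (· ≤ ·) (· ≤ ·) gtr
  prec_wk : IsWeakeningBetween (· ≤ ·) (· ≤ ·) prec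
  lesb_wk : IsWeakeningBetween (· ≤ ·) (· ≤ ·) lesb
  /-- `↑p ⪅ᵇ n ↔ p ⪯ n` -/
  lesb_up_iff_prec : ∀ (p : P) (n : N), lesb (up p) n ↔ prec p n
  /-- `p ⪯ n ↔ p ⪌ʳ ↓n` -/
  prec_iff_gtr_down : ∀ (p : P) (n : N), prec p n ↔ gtr p (down n)

variable {P Pd N Nd : Type*} [PartialOrder P] [PartialOrder Pd]
  [PartialOrder N] [PartialOrder Nd]

/-- The represented relation `⪌ : P → Ṅ`, `p ⪌ ṅ ↔ ↑p ⩿_Ṅ ṅ`. -/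
def ShiftData.gles (S : ShiftData P Pd N Nd) (p : P) (nd : Nd) : Prop := S.up p ≤ nd

/-- The represented relation `⪷ : Ṗ → N`, `ṗ ⪷ n ↔ ṗ ⩿_Ṗ ↓n`. -/
def ShiftData.pres (S : ShiftData P Pd N Nd) (pd : Pd) (n : N) : Prop := pd ≤ S.down n

/-- The relation `⸧ : P̊ → N̊` with `P̊ = P ⊕ Ṗ` and `N̊ = N ⊕ Ṅ`, defined by cases
from `⪯`, `⪌` and `⪷` (and never holding between two shifted elements). -/
def ShiftData.tack (S : ShiftData P Pd N Nd) : P ⊕ Pd → N ⊕ Nd → Prop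
  | Sum.inl p, Sum.inl n => S.prec p n
  | Sum.inl p, Sum.inr nd => S.gles p nd
  | Sum.inr pd, Sum.inl n => S.pres pd n
  | Sum.inr _, Sum.inr _ => False

/-- The relation `≤π` on `P ⊕ N`: `p ≤π q ↔ p ⪌ ↑q`, `p ≤π n ↔ p ⪯ n`,
`m ≤π n ↔ ↓m ⪷ n`, and no element of `N` is below an element of `P`. -/
def ShiftData.lepi (S : ShiftData P Pd N Nd) : P ⊕ N → P ⊕ N → Prop
  | Sum.inl p, Sum.inl q => S.gles p (S.up q)
  | Sum.inl p, Sum.inr n => S.prec p n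
  | Sum.inr m, Sum.inr n => S.pres (S.down m) n
  | Sum.inr _, Sum.inl _ => False

/-- A fully polarized LG-algebra: shift data together with the six heterogeneous
operations `⊗, \, /, ⊕, ⊘, ⦸` satisfying the residuation laws w.r.t. `⸧`. -/
structure FPLG (P Pd N Nd : Type*) [PartialOrder P] [PartialOrder Pd]
    [PartialOrder N] [PartialOrder Nd] extends ShiftData P Pd N Nd where
  /-- `⊗ : P̊ × P̊ → P` -/
  tens : P ⊕ Pd → P ⊕ Pd → P
  /-- `\ : P̊ × N̊ → N` -/
  lres : P ⊕ Pd → N ⊕ Nd → N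
  /-- `/ : N̊ × P̊ → N` -/
  rres : N ⊕ Nd → P ⊕ Pd → N
  /-- `⊕ : N̊ × N̊ → N` -/
  coten : N ⊕ Nd → N ⊕ Nd → N
  /-- `⊘ : P̊ × N̊ → P` -/
  lsub : P ⊕ Pd → N ⊕ Nd → P
  /-- `⦸ : N̊ × P̊ → P` -/
  rsub : N ⊕ Nd → P ⊕ Pd → P
  /-- `y ⸧ x \ z ↔ x ⊗ y ⸧ z` -/
  resid_left : ∀ (x y : P ⊕ Pd) (z : N ⊕ Nd),
    toShiftData.tack y (Sum.inl (lres x z)) ↔ toShiftData.tack (Sum.inl (tens x y)) z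
  /-- `x ⊗ y ⸧ z ↔ x ⸧ z / y` -/
  resid_right : ∀ (x y : P ⊕ Pd) (z : N ⊕ Nd),
    toShiftData.tack (Sum.inl (tens x y)) z ↔ toShiftData.tack x (Sum.inl (rres z y))
  /-- `x ⊘ w ⸧ z ↔ x ⸧ z ⊕ w` -/
  coresid_left : ∀ (x : P ⊕ Pd) (z w : N ⊕ Nd),
    toShiftData.tack (Sum.inl (lsub x w)) z ↔ toShiftData.tack x (Sum.inl (coten z w))
  /-- `x ⸧ z ⊕ w ↔ z ⦸ x ⸧ w` -/
  coresid_right : ∀ (x : P ⊕ Pd) (z w : N ⊕ Nd),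
    toShiftData.tack x (Sum.inl (coten z w)) ↔ toShiftData.tack (Sum.inl (rsub z x)) w

/-- `A⁺ ∈ P̊`: the positive representative of `A ∈ P ⊕ N`. -/
def FPLG.pos (F : FPLG P Pd N Nd) : P ⊕ N → P ⊕ Pd
  | Sum.inl p => Sum.inl p
  | Sum.inr n => Sum.inr (F.down n)

/-- `A⁻ ∈ N̊`: the negative representative of `A ∈ P ⊕ N`. -/
def FPLG.neg (F : FPLG P Pd N Nd) : P ⊕ N → N ⊕ Nd
  | Sum.inl p => Sum.inr (F.up p)
  | Sum.inr n => Sum.inl n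

/-- The induced operation `A ⊗' B = A⁺ ⊗ B⁺` on `P ⊕ N`. -/
def FPLG.tens' (F : FPLG P Pd N Nd) (A B : P ⊕ N) : P ⊕ N :=
  Sum.inl (F.tens (F.pos A) (F.pos B))

/-- The induced operation `A \' B = A⁺ \ B⁻` on `P ⊕ N`. -/
def FPLG.lres' (F : FPLG P Pd N Nd) (A B : P ⊕ N) : P ⊕ N :=
  Sum.inr (F.lres (F.pos A) (F.neg B))

/-- The induced operation `A /' B = A⁻ / B⁺` on `P ⊕ N`. -/
def FPLG.rres' (F : FPLG P Pd N Nd) (A B : P ⊕ N) : P ⊕ N :=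
  Sum.inr (F.rres (F.neg A) (F.pos B))

/-- The induced operation `A ⊕' B = A⁻ ⊕ B⁻` on `P ⊕ N`. -/
def FPLG.coten' (F : FPLG P Pd N Nd) (A B : P ⊕ N) : P ⊕ N :=
  Sum.inr (F.coten (F.neg A) (F.neg B))

/-- The induced operation `A ⊘' B = A⁺ ⊘ B⁻` on `P ⊕ N`. -/
def FPLG.lsub' (F : FPLG P Pd N Nd) (A B : P ⊕ N) : P ⊕ N :=
  Sum.inl (F.lsub (F.pos A) (F.neg B))

/-- The induced operation `A ⦸' B = A⁻ ⦸ B⁺` on `P ⊕ N`. -/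
def FPLG.rsub' (F : FPLG P Pd N Nd) (A B : P ⊕ N) : P ⊕ N :=
  Sum.inl (F.rsub (F.neg A) (F.pos B))

/-- The relation `≈` on `P ⊕ N`: `A ≈ B ↔ A ≤π B ∧ B ≤π A`. -/
def FPLG.equivRel (F : FPLG P Pd N Nd) (A B : P ⊕ N) : Prop :=
  F.toShiftData.lepi A B ∧ F.toShiftData.lepi B A

namespace FPLGAux

variable (F : FPLG P Pd N Nd)

lemma lepi_refl : ∀ A, F.toShiftData.lepi A A := by
  rintro (p | n)
  · exact le_refl (F.up p)
  · exact le_refl (F.down n)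

lemma lepi_trans : ∀ {A B C}, F.toShiftData.lepi A B → F.toShiftData.lepi B C →
    F.toShiftData.lepi A C := by
  rintro (p | m) (q | n) (r | k) h1 h2
  · exact le_trans h1 h2
  · exact (F.lesb_up_iff_prec p k).mp
      (F.lesb_wk h1 ((F.lesb_up_iff_prec q k).mpr h2) le_rfl)
  · exact h2.elim
  · exact (F.prec_iff_gtr_down p k).mpr
      (F.gtr_wk le_rfl ((F.prec_iff_gtr_down p n).mp h1) h2)
  · exact h1.elim
  · exact h1.elim
  · exact h2.elim
  · exact le_trans h1 h2

lemma resid1 (A B C : P ⊕ N) :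
    F.toShiftData.lepi B (F.lres' A C) ↔ F.toShiftData.lepi (F.tens' A B) C := by
  have h := F.resid_left (F.pos A) (F.pos B) (F.neg C)
  cases B <;> cases C <;> exact h

lemma resid2 (A B C : P ⊕ N) :
    F.toShiftData.lepi (F.tens' A B) C ↔ F.toShiftData.lepi A (F.rres' C B) := by
  have h := F.resid_right (F.pos A) (F.pos B) (F.neg C)
  cases A <;> cases C <;> exact h

lemma coresid1 (A B C : P ⊕ N) :
    F.toShiftData.lepi (F.lsub' C B) A ↔ F.toShiftData.lepi C (F.coten' A B) := by
  have h := F.coresid_left (F.pos C) (F.neg A) (F.neg B)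
  cases A <;> cases C <;> exact h

lemma coresid2 (A B C : P ⊕ N) :
    F.toShiftData.lepi C (F.coten' A B) ↔ F.toShiftData.lepi (F.rsub' A C) B := by
  have h := F.coresid_right (F.pos C) (F.neg A) (F.neg B)
  cases B <;> cases C <;> exact h

section Tonicity

variable {F}

local notation "L" => F.toShiftData.lepi

lemma tens_mono_right {A B B'} (h : L B B') : L (F.tens' A B) (F.tens' A B') :=
  (resid1 F A B _).mp (lepi_trans F h ((resid1 F A B' _).mpr (lepi_refl F _)))

lemma tens_mono_left {A A' B} (h : L A A') : L (F.tens' A B) (F.tens' A' B) :=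
  (resid2 F A B _).mpr (lepi_trans F h ((resid2 F A' B _).mp (lepi_refl F _)))

lemma lres_mono_right {A C C'} (h : L C C') : L (F.lres' A C) (F.lres' A C') :=
  (resid1 F A _ C').mpr
    (lepi_trans F ((resid1 F A _ C).mp (lepi_refl F (F.lres' A C))) h)

lemma lres_anti_left {A A' C} (h : L A' A) : L (F.lres' A C) (F.lres' A' C) :=
  (resid1 F A' _ C).mpr
    (lepi_trans F (tens_mono_left h)
      ((resid1 F A _ C).mp (lepi_refl F (F.lres' A C))))

lemma rres_mono_left {C C' B} (h : L C C') : L (F.rres' C B) (F.rres' C' B) :=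
  (resid2 F _ B C').mp
    (lepi_trans F ((resid2 F _ B C).mpr (lepi_refl F (F.rres' C B))) h)

lemma rres_anti_right {C B B'} (h : L B' B) : L (F.rres' C B) (F.rres' C B') :=
  (resid2 F _ B' C).mp
    (lepi_trans F (tens_mono_right h)
      ((resid2 F _ B C).mpr (lepi_refl F (F.rres' C B))))

lemma coten_mono_left {A A' B} (h : L A A') : L (F.coten' A B) (F.coten' A' B) :=
  (coresid1 F A' B _).mp
    (lepi_trans F ((coresid1 F A B _).mpr (lepi_refl F (F.coten' A B))) h)

lemma coten_mono_right {A B B'} (h : L B B') : L (F.coten' A B) (F.coten' A B') :=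
  (coresid2 F A B' _).mpr
    (lepi_trans F ((coresid2 F A B _).mp (lepi_refl F (F.coten' A B))) h)

lemma lsub_mono_left {C C' B} (h : L C C') : L (F.lsub' C B) (F.lsub' C' B) :=
  (coresid1 F _ B C).mpr
    (lepi_trans F h ((coresid1 F _ B C').mp (lepi_refl F (F.lsub' C' B))))

lemma lsub_anti_right {C B B'} (h : L B' B) : L (F.lsub' C B) (F.lsub' C B') :=
  (coresid1 F _ B C).mpr
    (lepi_trans F ((coresid1 F _ B' C).mp (lepi_refl F (F.lsub' C B')))
      (coten_mono_right h))

lemma rsub_anti_left {A A' C} (h : L A' A) : L (F.rsub' A C) (F.rsub' A' C) :=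
  (coresid2 F A _ C).mp
    (lepi_trans F ((coresid2 F A' _ C).mpr (lepi_refl F (F.rsub' A' C)))
      (coten_mono_left h))

lemma rsub_mono_right {A C C'} (h : L C C') : L (F.rsub' A C) (F.rsub' A C') :=
  (coresid2 F A _ C).mp
    (lepi_trans F h ((coresid2 F A _ C').mpr (lepi_refl F (F.rsub' A C'))))

end Tonicity

end FPLGAux

open FPLGAux

/-- `≈` is an equivalence relation, `≤π` descends to a partial order on the quotient
`(P ⊕ N)/≈`, the induced operations descend to well-defined operations on the quotient,
and the quotient with these operations is a Lambek-Grishin algebra. -/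
theorem stmt10 (F : FPLG P Pd N Nd) :
    Equivalence F.equivRel ∧
    ∃ (le : Quot F.equivRel → Quot F.equivRel → Prop)
      (tq uq oq cq sq bq : Quot F.equivRel → Quot F.equivRel → Quot F.equivRel),
      -- `le` is the descent of `≤π` to the quotient
      (∀ A B : P ⊕ N,
        le (Quot.mk F.equivRel A) (Quot.mk F.equivRel B) ↔ F.toShiftData.lepi A B) ∧
      -- `le` is a partial order on the quotient
      Reflexive le ∧ Transitive le ∧ AntiSymmetric le ∧
      -- the six operations descend to the quotient
      (∀ A B : P ⊕ N, tq (Quot.mk F.equivRel A) (Quot.mk F.equivRel B)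
        = Quot.mk F.equivRel (F.tens' A B)) ∧
      (∀ A B : P ⊕ N, uq (Quot.mk F.equivRel A) (Quot.mk F.equivRel B)
        = Quot.mk F.equivRel (F.lres' A B)) ∧
      (∀ A B : P ⊕ N, oq (Quot.mk F.equivRel A) (Quot.mk F.equivRel B)
        = Quot.mk F.equivRel (F.rres' A B)) ∧
      (∀ A B : P ⊕ N, cq (Quot.mk F.equivRel A) (Quot.mk F.equivRel B)
        = Quot.mk F.equivRel (F.coten' A B)) ∧
      (∀ A B : P ⊕ N, sq (Quot.mk F.equivRel A) (Quot.mk F.equivRel B)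
        = Quot.mk F.equivRel (F.lsub' A B)) ∧
      (∀ A B : P ⊕ N, bq (Quot.mk F.equivRel A) (Quot.mk F.equivRel B)
        = Quot.mk F.equivRel (F.rsub' A B)) ∧
      -- the quotient is a Lambek-Grishin algebra
      (∀ a b c : Quot F.equivRel,
        (le b (uq a c) ↔ le (tq a b) c) ∧ (le (tq a b) c ↔ le a (oq c b))) ∧
      (∀ a b c : Quot F.equivRel,
        (le (sq c b) a ↔ le c (cq a b)) ∧ (le c (cq a b) ↔ le (bq a c) b)) := by
  classical
  have equiv : Equivalence F.equivRel :=
    ⟨fun A => ⟨lepi_refl F A, lepi_refl F A⟩,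
     fun h => ⟨h.2, h.1⟩,
     fun h1 h2 => ⟨lepi_trans F h1.1 h2.1, lepi_trans F h2.2 h1.2⟩⟩
  refine ⟨equiv, ?_⟩
  have hle1 : ∀ (a : P ⊕ N) (b₁ b₂ : P ⊕ N), F.equivRel b₁ b₂ →
      F.toShiftData.lepi a b₁ = F.toShiftData.lepi a b₂ := fun a b₁ b₂ h =>
    propext ⟨fun g => lepi_trans F g h.1, fun g => lepi_trans F g h.2⟩
  have hle2 : ∀ (a₁ a₂ b : P ⊕ N), F.equivRel a₁ a₂ →
      F.toShiftData.lepi a₁ b = F.toShiftData.lepi a₂ b := fun a₁ a₂ b h =>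
    propext ⟨fun g => lepi_trans F h.2 g, fun g => lepi_trans F h.1 g⟩
  refine ⟨Quot.lift₂ F.toShiftData.lepi hle1 hle2,
    Quot.map₂ F.tens' (fun _ _ _ h => ⟨tens_mono_right h.1, tens_mono_right h.2⟩)
      (fun _ _ _ h => ⟨tens_mono_left h.1, tens_mono_left h.2⟩),
    Quot.map₂ F.lres' (fun _ _ _ h => ⟨lres_mono_right h.1, lres_mono_right h.2⟩)
      (fun _ _ _ h => ⟨lres_anti_left h.2, lres_anti_left h.1⟩),
    Quot.map₂ F.rres' (fun _ _ _ h => ⟨rres_anti_right h.2, rres_anti_right h.1⟩)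
      (fun _ _ _ h => ⟨rres_mono_left h.1, rres_mono_left h.2⟩),
    Quot.map₂ F.coten' (fun _ _ _ h => ⟨coten_mono_right h.1, coten_mono_right h.2⟩)
      (fun _ _ _ h => ⟨coten_mono_left h.1, coten_mono_left h.2⟩),
    Quot.map₂ F.lsub' (fun _ _ _ h => ⟨lsub_anti_right h.2, lsub_anti_right h.1⟩)
      (fun _ _ _ h => ⟨lsub_mono_left h.1, lsub_mono_left h.2⟩),
    Quot.map₂ F.rsub' (fun _ _ _ h => ⟨rsub_mono_right h.1, rsub_mono_right h.2⟩)
      (fun _ _ _ h => ⟨rsub_anti_left h.2, rsub_anti_left h.1⟩),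
    fun _ _ => Iff.rfl, ?_, ?_, ?_, fun _ _ => rfl, fun _ _ => rfl, fun _ _ => rfl,
    fun _ _ => rfl, fun _ _ => rfl, fun _ _ => rfl, ?_, ?_⟩
  · intro q
    induction q using Quot.ind with
    | _ a => exact lepi_refl F a
  · intro q1 q2 q3
    induction q1 using Quot.ind with
    | _ a =>
    induction q2 using Quot.ind with
    | _ b =>
    induction q3 using Quot.ind with
    | _ c => exact fun h1 h2 => lepi_trans F h1 h2
  · intro q1 q2
    induction q1 using Quot.ind with
    | _ a =>
    induction q2 using Quot.ind with
    | _ b => exact fun h1 h2 => Quot.sound ⟨h1, h2⟩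
  · intro q1 q2 q3
    induction q1 using Quot.ind with
    | _ a =>
    induction q2 using Quot.ind with
    | _ b =>
    induction q3 using Quot.ind with
    | _ c => exact ⟨resid1 F a b c, resid2 F a b c⟩
  · intro q1 q2 q3
    induction q1 using Quot.ind with
    | _ a =>
    induction q2 using Quot.ind with
    | _ b =>
    induction q3 using Quot.ind with
    | _ c => exact ⟨coresid1 F a b c, coresid2 F a b c⟩
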